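/- (Positivization of the conjugator.) For every n ≥ 3 and all elements U, V of B_n, there exists X ∈ B_n with U = X·V·X⁻¹ if and only if there exists a positive braid M ∈ B_n with U = M·V·M⁻¹, where a positive braid is an element of the submonoid of B_n generated by σ₁,…,σ_{n−1}. -/

import Mathlib

namespace Braid

/-- The braid relations on `n` strands: generators `0, …, n-2` stand for `σ₁, …, σ_{n-1}`. -/
def braidRels (n : ℕ) : Set (FreeGroup (Fin (n - 1))) :=
  { r | (∃ i j : Fin (n - 1), (i : ℕ) + 2 ≤ (j : ℕ) ∧
          r = FreeGroup.of i * FreeGroup.of j * (FreeGroup.of i)⁻¹ * (FreeGroup.of j)⁻¹) ∨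
        (∃ i j : Fin (n - 1), (j : ℕ) = (i : ℕ) + 1 ∧
          r = FreeGroup.of i * FreeGroup.of j * FreeGroup.of i *
              (FreeGroup.of j * FreeGroup.of i * FreeGroup.of j)⁻¹) }

/-- The braid group `B_n`, presented by `σ₁, …, σ_{n-1}` and the braid relations. -/
abbrev BraidGroup (n : ℕ) := PresentedGroup (braidRels n)

/-- The standard generator `σ i` of `B_n` (1-indexed); junk value `1` out of range. -/
def s (n : ℕ) (i : ℕ) : BraidGroup n :=
  if h : 1 ≤ i ∧ i ≤ n - 1 then PresentedGroup.of (⟨i - 1, by omega⟩ : Fin (n - 1)) else 1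

/-- The Garside half-twist `Δ = (σ₁)(σ₂σ₁)(σ₃σ₂σ₁)⋯(σ_{n-1}σ_{n-2}⋯σ₁)` in `B_n`. -/
def halfTwist (n : ℕ) : BraidGroup n :=
  ((List.range (n - 1)).map
    (fun r => (((List.range (r + 1)).reverse).map (fun k => s n (k + 1))).prod)).prod

/-- The submonoid of positive braids of `B_n`: the monoid generated by `σ₁, …, σ_{n-1}`. -/
def positive (n : ℕ) : Submonoid (BraidGroup n) :=
  Submonoid.closure (s n '' Set.Icc 1 (n - 1))

/-- The extended generators `ₐσᵢ` of `B_n`: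
`₀σᵢ = σᵢ`, `₁σᵢ = Δ·σᵢ⁻¹`, `₂σᵢ = σ_{n-i}`, `₃σᵢ = Δ·σ_{n-i}⁻¹`. -/
def es (n : ℕ) (a : ZMod 4) (i : ℕ) : BraidGroup n :=
  if a = 0 then s n i
  else if a = 1 then halfTwist n * (s n i)⁻¹
  else if a = 2 then s n (n - i)
  else halfTwist n * (s n (n - i))⁻¹

/-- An extended letter `ₐσᵢ^{e}` is coded as `(a, i, e)`, where `e = true` means
exponent `+1` (a positive letter) and `e = false` means exponent `-1` (a negative letter). -/
abbrev ELetter : Type := ZMod 4 × ℕ × Bool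

/-- The element of `B_n` represented by an extended letter. -/
def eletterProd (n : ℕ) (x : ELetter) : BraidGroup n :=
  if x.2.2 then es n x.1 x.2.1 else (es n x.1 x.2.1)⁻¹

/-- The element of `B_n` represented by an extended word. -/
def eprod (n : ℕ) (W : List ELetter) : BraidGroup n :=
  (W.map (eletterProd n)).prod

/-- The element of `B_n` represented by a positive extended word,
coded as a list of pairs `(a, i)` standing for the letters `ₐσᵢ` (no inverses). -/
def eposProd (n : ℕ) (P : List (ZMod 4 × ℕ)) : BraidGroup n :=
  (P.map (fun x => es n x.1 x.2)).prod

/-- A standard word is a list of pairs `(i, e)` standing for the letters `σᵢ^{±1}`;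
this is the element of `B_n` it represents. -/
def sprod (n : ℕ) (V : List (ℕ × Bool)) : BraidGroup n :=
  (V.map (fun x => if x.2 then s n x.1 else (s n x.1)⁻¹)).prod

/-- The element of `B_n` represented by a positive standard word (a list of indices). -/
def posProd (n : ℕ) (P : List ℕ) : BraidGroup n :=
  (P.map (s n)).prod

/-- The shift `sh(d, ₐσⱼ^{e}) = ₍ₐ₊d₎σⱼ^{f}`, with `f = e` if `d ∈ {0,2}` and
`f = -e` if `d ∈ {1,3}`. -/
def sh (d : ZMod 4) (x : ELetter) : ELetter :=
  (x.1 + d, x.2.1, if d = 0 ∨ d = 2 then x.2.2 else !x.2.2)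

/-- One step of the inductive definition of the separation of an extended word. -/
def sepStep (t : List (ZMod 4) × ZMod 4 × List (ZMod 4)) (x : ELetter) :
    List (ZMod 4) × ZMod 4 × List (ZMod 4) :=
  if x.2.2 = false then (t.1, t.2.1, t.2.2 ++ [-t.2.1])
  else
    match t.2.2 with
    | [] => (t.1 ++ [0], t.2.1, [])
    | a :: L'' => (t.1 ++ [a + t.2.1 + 1], t.2.1 + 2, L'' ++ [3 - t.2.1])

/-- The separation `(L, δ, L')` of an extended word, defined inductively from the left. -/
def separation (W : List ELetter) : List (ZMod 4) × ZMod 4 × List (ZMod 4) :=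
  W.foldl sepStep ([], 0, [])

/-- The bishift `SH2(L, δ, L', W)`: the first `|L|` letters of `W` are shifted by the
entries of `L`, the remaining letters are shifted by `δ +` the entries of `L'`. -/
def SH2 (L : List (ZMod 4)) (δ : ZMod 4) (L' : List (ZMod 4)) (W : List ELetter) :
    List ELetter :=
  List.zipWith sh L (W.take L.length) ++
    List.zipWith sh (L'.map (fun d => δ + d)) (W.drop L.length)


theorem rel_one {n : ℕ} {r : FreeGroup (Fin (n-1))} (h : r ∈ braidRels n) :
    PresentedGroup.mk (braidRels n) r = 1 := by
  apply (QuotientGroup.eq_one_iff r).mpr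
  exact Subgroup.subset_normalClosure h

theorem s_out {n i : ℕ} (h : ¬ (1 ≤ i ∧ i ≤ n - 1)) : s n i = 1 := by
  rw [s, dif_neg h]

theorem s_in {n i : ℕ} (h1 : 1 ≤ i) (h2 : i ≤ n - 1) :
    s n i = PresentedGroup.of (⟨i - 1, by omega⟩ : Fin (n - 1)) := by
  rw [s, dif_pos ⟨h1, h2⟩]

theorem s_comm {n : ℕ} {i j : ℕ} (h : i + 2 ≤ j) : Commute (s n i) (s n j) := by
  by_cases hi : 1 ≤ i ∧ i ≤ n - 1
  · by_cases hj : 1 ≤ j ∧ j ≤ n - 1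
    · rw [s_in hi.1 hi.2, s_in hj.1 hj.2]
      have hr := rel_one (n := n)
        (r := FreeGroup.of (⟨i-1, by omega⟩ : Fin (n-1)) * FreeGroup.of (⟨j-1, by omega⟩ : Fin (n-1))
          * (FreeGroup.of (⟨i-1, by omega⟩ : Fin (n-1)))⁻¹ * (FreeGroup.of (⟨j-1, by omega⟩ : Fin (n-1)))⁻¹)
        (Or.inl ⟨⟨i-1, by omega⟩, ⟨j-1, by omega⟩, by simp; omega, rfl⟩)
      simp only [map_mul, map_inv] at hr
      have ha : ∀ x : Fin (n-1), PresentedGroup.mk (braidRels n) (FreeGroup.of x) = PresentedGroup.of x := fun _ => rfl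
      rw [ha, ha] at hr
      rw [mul_inv_eq_one, mul_inv_eq_iff_eq_mul] at hr
      exact hr
    · rw [s_out hj]; exact Commute.one_right _
  · rw [s_out hi]; exact Commute.one_left _

theorem s_braid {n : ℕ} {i : ℕ} (h1 : 1 ≤ i) (h2 : i + 1 ≤ n - 1) :
    s n i * s n (i+1) * s n i = s n (i+1) * s n i * s n (i+1) := by
  rw [s_in h1 (by omega), s_in (by omega : 1 ≤ i+1) h2]
  have hr := rel_one (n := n)
    (r := FreeGroup.of (⟨i-1, by omega⟩ : Fin (n-1)) * FreeGroup.of (⟨i+1-1, by omega⟩ : Fin (n-1))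
      * FreeGroup.of (⟨i-1, by omega⟩ : Fin (n-1)) *
      (FreeGroup.of (⟨i+1-1, by omega⟩ : Fin (n-1)) * FreeGroup.of (⟨i-1, by omega⟩ : Fin (n-1))
        * FreeGroup.of (⟨i+1-1, by omega⟩ : Fin (n-1)))⁻¹)
    (Or.inr ⟨⟨i-1, by omega⟩, ⟨i+1-1, by omega⟩, by simp; omega, rfl⟩)
  simp only [map_mul, map_inv] at hr
  have ha : ∀ x : Fin (n-1), PresentedGroup.mk (braidRels n) (FreeGroup.of x) = PresentedGroup.of x := fun _ => rfl
  rw [ha, ha] at hr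
  exact mul_inv_eq_one.mp hr

def descL (k : ℕ) : List ℕ := (List.range k).reverse.map (·+1)
def ascL (k : ℕ) : List ℕ := (List.range k).map (·+1)
def Ak (n k : ℕ) : BraidGroup n := posProd n (descL k)
def Ck (n k : ℕ) : BraidGroup n := posProd n (ascL k)
def Dl (n m : ℕ) : BraidGroup n := ((List.range m).map (fun r => Ak n (r+1))).prod

theorem descL_succ (k : ℕ) : descL (k+1) = (k+1) :: descL k := by
  simp [descL, List.range_succ]

theorem ascL_succ (k : ℕ) : ascL (k+1) = ascL k ++ [k+1] := by
  simp [ascL, List.range_succ]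

theorem mem_descL {a k : ℕ} (h : a ∈ descL k) : 1 ≤ a ∧ a ≤ k := by
  simp [descL] at h
  obtain ⟨b, hb, rfl⟩ := h
  omega

theorem mem_ascL {a k : ℕ} (h : a ∈ ascL k) : 1 ≤ a ∧ a ≤ k := by
  simp [ascL] at h
  obtain ⟨b, hb, rfl⟩ := h
  omega

theorem posProd_cons (n a : ℕ) (L : List ℕ) : posProd n (a :: L) = s n a * posProd n L := by
  simp [posProd]

theorem posProd_append (n : ℕ) (L1 L2 : List ℕ) :
    posProd n (L1 ++ L2) = posProd n L1 * posProd n L2 := by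
  simp [posProd]

theorem Ak_succ (n k : ℕ) : Ak n (k+1) = s n (k+1) * Ak n k := by
  rw [Ak, descL_succ, posProd_cons]; rfl

theorem Ck_succ (n k : ℕ) : Ck n (k+1) = Ck n k * s n (k+1) := by
  rw [Ck, ascL_succ, posProd_append]; simp [posProd]; rfl

theorem Dl_succ (n m : ℕ) : Dl n (m+1) = Dl n m * Ak n (m+1) := by
  simp [Dl, List.range_succ]

theorem s_comm_posProd {n i : ℕ} {L : List ℕ} (h : ∀ a ∈ L, a + 2 ≤ i) :
    Commute (s n i) (posProd n L) := by
  apply Commute.list_prod_right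
  intro x hx
  simp only [List.mem_map] at hx
  obtain ⟨a, ha, rfl⟩ := hx
  exact (s_comm (h a ha)).symm

theorem s_comm_Ak {n i k : ℕ} (h : k + 2 ≤ i) : Commute (s n i) (Ak n k) :=
  s_comm_posProd (fun a ha => by have := mem_descL ha; omega)

theorem s_comm_Dl {n i m : ℕ} (h : m + 2 ≤ i) : Commute (s n i) (Dl n m) := by
  induction m with
  | zero => simpa [Dl] using Commute.one_right _
  | succ t ih =>
      rw [Dl_succ]
      exact Commute.mul_right (ih (by omega)) (s_comm_Ak (by omega))

theorem K1 {n : ℕ} : ∀ k j : ℕ, 1 ≤ j → j < k → k ≤ n - 1 →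
    s n j * Ak n k = Ak n k * s n (j+1) := by
  intro k
  induction k with
  | zero => intro j h1 h2 _; omega
  | succ k ih =>
      intro j h1 h2 hk
      rcases Nat.lt_or_ge j k with hjk | hjk
      · calc s n j * Ak n (k+1) = s n j * s n (k+1) * Ak n k := by rw [Ak_succ]; group
          _ = s n (k+1) * (s n j * Ak n k) := by rw [(s_comm (by omega : j+2 ≤ k+1)).eq]; group
          _ = s n (k+1) * (Ak n k * s n (j+1)) := by rw [ih j h1 hjk (by omega)]
          _ = Ak n (k+1) * s n (j+1) := by rw [Ak_succ]; group
      · have hj : j = k := by omega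
        subst hj
        obtain ⟨k', rfl⟩ : ∃ k', j = k' + 1 := ⟨j - 1, by omega⟩
        calc s n (k'+1) * Ak n (k'+2)
            = s n (k'+1) * s n (k'+2) * s n (k'+1) * Ak n k' := by
              rw [Ak_succ, Ak_succ]; group
          _ = s n (k'+2) * s n (k'+1) * s n (k'+2) * Ak n k' := by
              rw [s_braid (by omega) (by omega)]
          _ = s n (k'+2) * s n (k'+1) * (Ak n k' * s n (k'+2)) := by
              rw [mul_assoc, mul_assoc, (s_comm_Ak (le_refl (k'+2))).eq, ← mul_assoc]
          _ = Ak n (k'+2) * s n (k'+2) := by rw [Ak_succ, Ak_succ]; group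

theorem K1' {n : ℕ} : ∀ k j : ℕ, 1 ≤ j → j + 1 ≤ k → k ≤ n - 1 →
    Ck n k * s n j = s n (j+1) * Ck n k := by
  intro k
  induction k with
  | zero => intro j h1 h2 _; omega
  | succ k ih =>
      intro j h1 h2 hk
      rcases Nat.lt_or_ge (j+1) (k+1) with hjk | hjk
      · calc Ck n (k+1) * s n j = Ck n k * (s n (k+1) * s n j) := by rw [Ck_succ]; group
          _ = Ck n k * s n j * s n (k+1) := by rw [← (s_comm (by omega : j+2 ≤ k+1)).eq]; group
          _ = s n (j+1) * Ck n k * s n (k+1) := by rw [ih j h1 (by omega) (by omega)]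
          _ = s n (j+1) * Ck n (k+1) := by rw [Ck_succ]; group
      · have hj : j = k := by omega
        subst hj
        obtain ⟨k', rfl⟩ : ∃ k', j = k' + 1 := ⟨j - 1, by omega⟩
        have hC : Commute (s n (k'+2)) (Ck n k') :=
          s_comm_posProd (fun a ha => by have := mem_ascL ha; omega)
        calc Ck n (k'+2) * s n (k'+1)
            = Ck n k' * (s n (k'+1) * s n (k'+2) * s n (k'+1)) := by
              rw [Ck_succ, Ck_succ]; group
          _ = Ck n k' * (s n (k'+2) * s n (k'+1) * s n (k'+2)) := by
              rw [s_braid (by omega) (by omega)]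
          _ = s n (k'+2) * (Ck n k' * s n (k'+1) * s n (k'+2)) := by
              rw [← mul_assoc, ← mul_assoc, ← hC.eq]; group
          _ = s n (k'+2) * Ck n (k'+2) := by rw [Ck_succ, Ck_succ]

theorem DlRec {n : ℕ} : ∀ m : ℕ, Dl n (m+1) = Ck n (m+1) * Dl n m := by
  intro m
  induction m with
  | zero =>
      simp [Dl, List.range_succ, Ak, Ck, descL, ascL]
  | succ t ih =>
      have hD : Commute (s n (t+2)) (Dl n t) := s_comm_Dl (by omega)
      calc Dl n (t+2) = Ck n (t+1) * Dl n t * (s n (t+2) * Ak n (t+1)) := by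
            rw [Dl_succ, ih, Ak_succ]
        _ = Ck n (t+1) * s n (t+2) * (Dl n t * Ak n (t+1)) := by
            rw [mul_assoc, ← mul_assoc (Dl n t), ← hD.eq]; group
        _ = Ck n (t+2) * Dl n (t+1) := by rw [Ck_succ n (t+1), Ck_succ n t, Dl_succ]

theorem flip {n : ℕ} : ∀ m i : ℕ, 1 ≤ i → i ≤ m → m ≤ n - 1 →
    Dl n m * s n i = s n (m+1-i) * Dl n m := by
  intro m
  induction m with
  | zero => intro i h1 h2 _; omega
  | succ m ih =>
      intro i h1 h2 hm
      rcases Nat.lt_or_ge 1 i with hi | hi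
      · obtain ⟨i', rfl⟩ : ∃ i', i = i' + 1 := ⟨i - 1, by omega⟩
        have harith : m + 1 + 1 - (i'+1) = m + 1 - i' := by omega
        rw [harith]
        calc Dl n (m+1) * s n (i'+1) = Dl n m * (Ak n (m+1) * s n (i'+1)) := by
              rw [Dl_succ]; group
          _ = Dl n m * s n i' * Ak n (m+1) := by
              rw [← K1 (m+1) i' (by omega) (by omega) hm]; group
          _ = s n (m+1-i') * (Dl n m * Ak n (m+1)) := by
              rw [ih i' (by omega) (by omega) (by omega)]; group
          _ = s n (m+1-i') * Dl n (m+1) := by rw [Dl_succ]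
      · have hi1 : i = 1 := by omega
        subst hi1
        have harith : m + 1 + 1 - 1 = m + 1 := by omega
        rw [harith]
        rcases Nat.eq_zero_or_pos m with hm0 | hm0
        · subst hm0
          simp [Dl, List.range_succ, Ak, descL, posProd]
        · have harith2 : m + 1 - 1 = m := by omega
          calc Dl n (m+1) * s n 1 = Ck n (m+1) * (Dl n m * s n 1) := by
                rw [DlRec]; group
            _ = Ck n (m+1) * s n m * Dl n m := by
                rw [ih 1 le_rfl hm0 (by omega), harith2]; group
            _ = s n (m+1) * (Ck n (m+1) * Dl n m) := by
                rw [K1' (m+1) m (by omega) (by omega) hm]; group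
            _ = s n (m+1) * Dl n (m+1) := by rw [DlRec]


theorem halfTwist_eq_Dl (n : ℕ) : halfTwist n = Dl n (n-1) := by
  simp only [halfTwist, Dl, Ak, posProd, descL, List.map_map]
  rfl

theorem flipD {n : ℕ} {i : ℕ} (h1 : 1 ≤ i) (h2 : i ≤ n - 1) :
    halfTwist n * s n i = s n (n - i) * halfTwist n := by
  rw [halfTwist_eq_Dl, flip (n-1) i h1 h2 le_rfl, show n - 1 + 1 - i = n - i by omega]

theorem sq_comm_s {n : ℕ} (i : ℕ) : Commute (halfTwist n ^ 2) (s n i) := by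
  by_cases h : 1 ≤ i ∧ i ≤ n - 1
  · unfold Commute SemiconjBy
    have h2 : n - (n - i) = i := by omega
    have ha : 1 ≤ n - i := by omega
    have hb : n - i ≤ n - 1 := by omega
    calc halfTwist n ^ 2 * s n i = halfTwist n * (halfTwist n * s n i) := by
          rw [sq, mul_assoc]
      _ = halfTwist n * s n (n-i) * halfTwist n := by rw [flipD h.1 h.2]; group
      _ = s n (n-(n-i)) * halfTwist n * halfTwist n := by rw [flipD ha hb]
      _ = s n i * halfTwist n ^ 2 := by rw [h2, sq]; group
  · rw [s_out h]; exact Commute.one_right _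

theorem of_eq_s {n : ℕ} (j : Fin (n-1)) :
    (PresentedGroup.of j : BraidGroup n) = s n ((j : ℕ) + 1) := by
  rw [s_in (by omega) (by omega)]
  congr 1

theorem sq_central {n : ℕ} (g : BraidGroup n) : Commute (halfTwist n ^ 2) g := by
  have hg : g ∈ Subgroup.centralizer {halfTwist n ^ 2} := by
    apply PresentedGroup.generated_by
    intro j
    rw [Subgroup.mem_centralizer_iff]
    intro h hh
    rw [Set.mem_singleton_iff] at hh
    subst hh
    rw [of_eq_s]
    exact (sq_comm_s ((j : ℕ) + 1)).eq
  exact Subgroup.mem_centralizer_iff.mp hg (halfTwist n ^ 2) (Set.mem_singleton_iff.mpr rfl)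

theorem s_mem_pos {n : ℕ} (i : ℕ) : s n i ∈ positive n := by
  by_cases h : 1 ≤ i ∧ i ≤ n - 1
  · exact Submonoid.subset_closure ⟨i, h, rfl⟩
  · rw [s_out h]; exact one_mem _

theorem posProd_mem {n : ℕ} (L : List ℕ) : posProd n L ∈ positive n := by
  apply Submonoid.list_prod_mem
  intro x hx
  simp only [List.mem_map] at hx
  obtain ⟨a, _, rfl⟩ := hx
  exact s_mem_pos a

theorem Dl_mem {n m : ℕ} : Dl n m ∈ positive n := by
  apply Submonoid.list_prod_mem
  intro x hx
  simp only [List.mem_map] at hx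
  obtain ⟨a, _, rfl⟩ := hx
  exact posProd_mem _

theorem halfTwist_mem {n : ℕ} : halfTwist n ∈ positive n := by
  rw [halfTwist_eq_Dl]; exact Dl_mem

theorem conj_pos {n : ℕ} {P : BraidGroup n} (hP : P ∈ positive n) :
    halfTwist n * P * (halfTwist n)⁻¹ ∈ positive n := by
  induction hP using Submonoid.closure_induction with
  | mem x hx =>
      obtain ⟨i, hi, rfl⟩ := hx
      have : halfTwist n * s n i * (halfTwist n)⁻¹ = s n (n - i) := by
        rw [flipD hi.1 hi.2]; group
      rw [this]
      have h1 := hi.1; have h2 := hi.2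
      exact Submonoid.subset_closure ⟨n - i, ⟨by omega, by omega⟩, rfl⟩
  | one => simpa using one_mem _
  | mul x y hx hy ihx ihy =>
      have : halfTwist n * (x * y) * (halfTwist n)⁻¹ =
        (halfTwist n * x * (halfTwist n)⁻¹) * (halfTwist n * y * (halfTwist n)⁻¹) := by group
      rw [this]; exact mul_mem ihx ihy

theorem conj_pos' {n : ℕ} {P : BraidGroup n} (hP : P ∈ positive n) :
    (halfTwist n)⁻¹ * P * halfTwist n ∈ positive n := by
  induction hP using Submonoid.closure_induction with
  | mem x hx =>
      obtain ⟨i, hi, rfl⟩ := hx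
      have ha := hi.1; have hb := hi.2
      have h2 : n - (n - i) = i := by omega
      have hkey : (halfTwist n)⁻¹ * s n i * halfTwist n = s n (n - i) := by
        have hf := flipD (n := n) (i := n - i) (by omega) (by omega)
        rw [h2] at hf
        rw [mul_assoc, ← hf]; group
      rw [hkey]
      exact Submonoid.subset_closure ⟨n - i, ⟨by omega, by omega⟩, rfl⟩
  | one => simpa using one_mem _
  | mul x y hx hy ihx ihy =>
      have : (halfTwist n)⁻¹ * (x * y) * halfTwist n =
        ((halfTwist n)⁻¹ * x * halfTwist n) * ((halfTwist n)⁻¹ * y * halfTwist n) := by group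
      rw [this]; exact mul_mem ihx ihy

theorem conj_pow_pos {n : ℕ} {P : BraidGroup n} (hP : P ∈ positive n) (k : ℕ) :
    (halfTwist n)⁻¹ ^ k * P * halfTwist n ^ k ∈ positive n := by
  induction k with
  | zero => simpa using hP
  | succ k ih =>
      have : (halfTwist n)⁻¹ ^ (k+1) * P * halfTwist n ^ (k+1) =
          (halfTwist n)⁻¹ * ((halfTwist n)⁻¹ ^ k * P * halfTwist n ^ k) * halfTwist n := by
        rw [pow_succ, pow_succ]; group
      rw [this]
      exact conj_pos' ih

theorem conj_pow_pos' {n : ℕ} {P : BraidGroup n} (hP : P ∈ positive n) (k : ℕ) :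
    halfTwist n ^ k * P * (halfTwist n)⁻¹ ^ k ∈ positive n := by
  induction k with
  | zero => simpa using hP
  | succ k ih =>
      have : halfTwist n ^ (k+1) * P * (halfTwist n)⁻¹ ^ (k+1) =
          halfTwist n * (halfTwist n ^ k * P * (halfTwist n)⁻¹ ^ k) * (halfTwist n)⁻¹ := by
        rw [pow_succ, pow_succ]; group
      rw [this]
      exact conj_pos ih


theorem Ck_mem {n k : ℕ} : Ck n k ∈ positive n := posProd_mem _

theorem s_eq_conj {n : ℕ} : ∀ k, 1 ≤ k → k ≤ n - 1 →
    s n k = Ck n (n-1) ^ (k-1) * s n 1 * ((Ck n (n-1))⁻¹) ^ (k-1) := by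
  intro k
  induction k with
  | zero => omega
  | succ k ih =>
      intro h1 h2
      rcases Nat.eq_zero_or_pos k with rfl | hk
      · simp
      · have hK := K1' (n := n) (n-1) k (by omega) (by omega) le_rfl
        have e : s n (k+1) = Ck n (n-1) * s n k * (Ck n (n-1))⁻¹ := by
          rw [hK]; group
        rw [e, ih hk (by omega)]
        have harith : k + 1 - 1 = (k - 1) + 1 := by omega
        rw [harith, pow_succ, pow_succ]
        group

theorem delta_head {n : ℕ} (hn : 3 ≤ n) :
    ∃ R ∈ positive n, halfTwist n = s n 1 * R := by
  rw [halfTwist_eq_Dl]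
  obtain ⟨m, hm⟩ : ∃ m, n - 1 = m + 1 := ⟨n-2, by omega⟩
  rw [congrArg (Dl n) hm]
  refine ⟨((List.range m).map (fun r => Ak n (r+2))).prod, ?_, ?_⟩
  · apply Submonoid.list_prod_mem
    intro x hx
    simp only [List.mem_map] at hx
    obtain ⟨a, _, rfl⟩ := hx
    exact posProd_mem _
  · rw [Dl, List.range_succ_eq_map, List.map_cons, List.map_map, List.prod_cons]
    have h1 : Ak n 1 = s n 1 := by simp [Ak, descL, posProd, List.range_succ]
    rw [← h1]
    rfl

theorem CkinvPow {n : ℕ} (hn : 3 ≤ n) :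
    ∀ k, ((Ck n (n-1))⁻¹) ^ k * halfTwist n ^ k ∈ positive n := by
  intro k
  induction k with
  | zero => simpa using one_mem _
  | succ k ih =>
      have hE : (Ck n (n-1))⁻¹ * halfTwist n = Dl n (n-2) := by
        have := DlRec (n := n) (n-2)
        rw [show n - 2 + 1 = n - 1 by omega] at this
        rw [halfTwist_eq_Dl, this]; group
      have key : ((Ck n (n-1))⁻¹) ^ (k+1) * halfTwist n ^ (k+1) =
          (((Ck n (n-1))⁻¹) ^ k * halfTwist n ^ k) *
            (((halfTwist n)⁻¹) ^ k * ((Ck n (n-1))⁻¹ * halfTwist n) * halfTwist n ^ k) := by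
        rw [pow_succ, pow_succ]
        group
      rw [key, hE]
      exact mul_mem ih (conj_pow_pos Dl_mem k)

theorem DeltaPowCkinv {n : ℕ} (hn : 3 ≤ n) (k : ℕ) :
    halfTwist n ^ k * ((Ck n (n-1))⁻¹) ^ k ∈ positive n := by
  have key : halfTwist n ^ k * ((Ck n (n-1))⁻¹) ^ k =
      halfTwist n ^ k * (((Ck n (n-1))⁻¹) ^ k * halfTwist n ^ k) * ((halfTwist n)⁻¹) ^ k := by
    group
  rw [key]
  exact conj_pow_pos' (CkinvPow hn k) k

theorem central_pow {n : ℕ} (m : ℕ) (g : BraidGroup n) :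
    Commute (halfTwist n ^ (2 * m)) g := by
  rw [pow_mul]
  exact (sq_central g).pow_left m

theorem absorb {n : ℕ} (hn : 3 ≤ n) {k : ℕ} (h1 : 1 ≤ k) (h2 : k ≤ n - 1) :
    (s n k)⁻¹ * halfTwist n ^ (2 * n) ∈ positive n := by
  obtain ⟨R, hR, hΔ⟩ := delta_head hn
  have e1 : (s n k)⁻¹ = Ck n (n-1) ^ (k-1) * (s n 1)⁻¹ * ((Ck n (n-1))⁻¹) ^ (k-1) := by
    rw [s_eq_conj k h1 h2]; group
  have hc : ((Ck n (n-1))⁻¹) ^ (k-1) * halfTwist n ^ (2 * n) =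
      halfTwist n ^ (2 * n) * ((Ck n (n-1))⁻¹) ^ (k-1) :=
    ((central_pow (n := n) n (((Ck n (n-1))⁻¹) ^ (k-1))).eq).symm
  have e2 : halfTwist n ^ (2 * n) = halfTwist n * (halfTwist n ^ (2*n - k) *
      halfTwist n ^ (k-1)) := by
    rw [← pow_add, ← pow_succ']
    congr 1
    omega
  have key : (s n k)⁻¹ * halfTwist n ^ (2 * n) = Ck n (n-1) ^ (k-1) *
      (R * (halfTwist n ^ (2*n - k) * (halfTwist n ^ (k-1) * ((Ck n (n-1))⁻¹) ^ (k-1)))) :=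
    calc (s n k)⁻¹ * halfTwist n ^ (2 * n)
      = Ck n (n-1) ^ (k-1) * (s n 1)⁻¹ *
          (((Ck n (n-1))⁻¹) ^ (k-1) * halfTwist n ^ (2 * n)) := by rw [e1]; group
    _ = Ck n (n-1) ^ (k-1) * (s n 1)⁻¹ *
          (halfTwist n ^ (2 * n) * ((Ck n (n-1))⁻¹) ^ (k-1)) := by rw [hc]
    _ = Ck n (n-1) ^ (k-1) * (((s n 1)⁻¹ * halfTwist n) * (halfTwist n ^ (2*n - k) *
          (halfTwist n ^ (k-1) * ((Ck n (n-1))⁻¹) ^ (k-1)))) := by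
        rw [e2]; group
    _ = Ck n (n-1) ^ (k-1) * (R * (halfTwist n ^ (2*n - k) *
          (halfTwist n ^ (k-1) * ((Ck n (n-1))⁻¹) ^ (k-1)))) := by
        rw [hΔ]; group
  rw [key]
  exact mul_mem (pow_mem Ck_mem _) (mul_mem hR (mul_mem (pow_mem halfTwist_mem _)
    (DeltaPowCkinv hn _)))

theorem inv_absorb {n : ℕ} (hn : 3 ≤ n) {P : BraidGroup n} (hP : P ∈ positive n) :
    ∃ m : ℕ, P⁻¹ * (halfTwist n ^ (2 * n)) ^ m ∈ positive n := by
  induction hP using Submonoid.closure_induction with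
  | mem x hx =>
      obtain ⟨i, hi, rfl⟩ := hx
      exact ⟨1, by rw [pow_one]; exact absorb hn hi.1 hi.2⟩
  | one => exact ⟨0, by simpa using one_mem _⟩
  | mul x y hx hy ihx ihy =>
      obtain ⟨mx, hmx⟩ := ihx
      obtain ⟨my, hmy⟩ := ihy
      refine ⟨mx + my, ?_⟩
      have hc : Commute ((halfTwist n ^ (2*n)) ^ my) (x⁻¹ * (halfTwist n ^ (2*n)) ^ mx) :=
        (central_pow (n := n) n (x⁻¹ * (halfTwist n ^ (2*n)) ^ mx)).pow_left my
      have key : (x * y)⁻¹ * (halfTwist n ^ (2*n)) ^ (mx + my) =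
          (y⁻¹ * (halfTwist n ^ (2*n)) ^ my) * (x⁻¹ * (halfTwist n ^ (2*n)) ^ mx) := by
        rw [pow_add]
        calc (x * y)⁻¹ * ((halfTwist n ^ (2*n)) ^ mx * (halfTwist n ^ (2*n)) ^ my)
            = y⁻¹ * ((halfTwist n ^ (2*n)) ^ my * (x⁻¹ * (halfTwist n ^ (2*n)) ^ mx)) := by
              rw [hc.eq]; group
          _ = (y⁻¹ * (halfTwist n ^ (2*n)) ^ my) * (x⁻¹ * (halfTwist n ^ (2*n)) ^ mx) := by
              group
      rw [key]
      exact mul_mem hmy hmx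

theorem normalize {n : ℕ} (hn : 3 ≤ n) (X : BraidGroup n) :
    ∃ m : ℕ, X * (halfTwist n ^ (2 * n)) ^ m ∈ positive n := by
  have hmem : ∀ (a b : BraidGroup n),
      (∃ m : ℕ, a * (halfTwist n ^ (2*n)) ^ m ∈ positive n) →
      (∃ m : ℕ, b * (halfTwist n ^ (2*n)) ^ m ∈ positive n) →
      (∃ m : ℕ, (a * b) * (halfTwist n ^ (2*n)) ^ m ∈ positive n) := by
    rintro a b ⟨ma, hma⟩ ⟨mb, hmb⟩
    refine ⟨ma + mb, ?_⟩
    have hc : Commute ((halfTwist n ^ (2*n)) ^ ma) b := (central_pow n _).pow_left ma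
    have key : (a * b) * (halfTwist n ^ (2*n)) ^ (ma + mb) =
        (a * (halfTwist n ^ (2*n)) ^ ma) * (b * (halfTwist n ^ (2*n)) ^ mb) := by
      rw [pow_add]
      calc (a * b) * ((halfTwist n ^ (2*n)) ^ ma * (halfTwist n ^ (2*n)) ^ mb)
          = a * ((halfTwist n ^ (2*n)) ^ ma * b) * (halfTwist n ^ (2*n)) ^ mb := by
            rw [hc.eq]; group
        _ = (a * (halfTwist n ^ (2*n)) ^ ma) * (b * (halfTwist n ^ (2*n)) ^ mb) := by
            group
    rw [key]
    exact mul_mem hma hmb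
  let H : Subgroup (BraidGroup n) :=
    { carrier := {X | ∃ m : ℕ, X * (halfTwist n ^ (2*n)) ^ m ∈ positive n}
      one_mem' := ⟨0, by simpa using one_mem _⟩
      mul_mem' := fun {a b} ha hb => hmem a b ha hb
      inv_mem' := by
        rintro a ⟨m, hm⟩
        obtain ⟨m0, hm0⟩ := inv_absorb hn hm
        refine ⟨m0, ?_⟩
        have key : a⁻¹ * (halfTwist n ^ (2*n)) ^ m0 =
            (halfTwist n ^ (2*n)) ^ m *
              ((a * (halfTwist n ^ (2*n)) ^ m)⁻¹ * (halfTwist n ^ (2*n)) ^ m0) := by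
          group
        rw [key]
        exact mul_mem (pow_mem (pow_mem halfTwist_mem _) _) hm0 }
  have : X ∈ H := by
    apply PresentedGroup.generated_by
    intro j
    exact ⟨0, by rw [pow_zero, mul_one, of_eq_s]; exact s_mem_pos _⟩
  exact this

/-- Positivization of the conjugator: `U` and `V` are conjugate in `B_n` if and only
if they are conjugate by a positive braid. -/
theorem positive_conjugator (n : ℕ) (hn : 3 ≤ n) (U V : BraidGroup n) :
    (∃ X : BraidGroup n, U = X * V * X⁻¹) ↔
      (∃ M ∈ positive n, U = M * V * M⁻¹) := by
  constructor
  · rintro ⟨X, hX⟩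
    obtain ⟨m, hM⟩ := normalize hn X
    refine ⟨X * (halfTwist n ^ (2*n)) ^ m, hM, ?_⟩
    have hc : Commute ((halfTwist n ^ (2*n)) ^ m) V := (central_pow n _).pow_left m
    rw [hX]
    symm
    calc (X * (halfTwist n ^ (2*n)) ^ m) * V * (X * (halfTwist n ^ (2*n)) ^ m)⁻¹
        = X * ((halfTwist n ^ (2*n)) ^ m * V) * (((halfTwist n ^ (2*n)) ^ m)⁻¹ * X⁻¹) := by
          group
      _ = X * (V * (halfTwist n ^ (2*n)) ^ m) * (((halfTwist n ^ (2*n)) ^ m)⁻¹ * X⁻¹) := by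
          rw [hc.eq]
      _ = X * V * X⁻¹ := by group
  · rintro ⟨M, _, h⟩
    exact ⟨M, h⟩


end Braid
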